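/- arXiv:2203.16861 — 2 statements merged into one kernel-verified Lean document; each statement's English description precedes it below -/
import Mathlib

section
/- For any Eulerian graph G on n ≥ 4 vertices, every vertex of TS_2(G) has even degree; specifically, for an independent set I = {v_1, v_2}, deg_{TS_2(G)}(I) = deg_G(v_1) + deg_G(v_2) − 2|N_G(v_1) ∩ N_G(v_2)|, which is even. Consequently every connected component of TS_2(G) is Eulerian. -/
open SimpleGraph

/-- `I` is an independent (stable) set of `G`. -/
def IsIndep {V : Type*} (G : SimpleGraph V) (I : Finset V) : Prop :=
  ∀ u ∈ I, ∀ v ∈ I, ¬ G.Adj u v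

/-- Vertices of the `TS_k`-reconfiguration graph: size-`k` independent sets of `G`. -/
abbrev TSVert {V : Type*} (G : SimpleGraph V) (k : ℕ) := {I : Finset V // I.card = k ∧ IsIndep G I}

/-- The `TS_k`-reconfiguration graph of `G`: size-`k` independent sets, adjacent iff
`I \ J = {u}`, `J \ I = {v}` and `uv ∈ E(G)`. -/
def TSk {V : Type*} [DecidableEq V] (G : SimpleGraph V) (k : ℕ) : SimpleGraph (TSVert G k) :=
  SimpleGraph.fromRel (fun I J =>
    ∃ u v, (I : Finset V) \ (J : Finset V) = {u} ∧
      (J : Finset V) \ (I : Finset V) = {v} ∧ G.Adj u v)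

lemma tsk_key {V : Type*} [Fintype V] [DecidableEq V] (G : SimpleGraph V)
    (v₁ v₂ : V) (h : ({v₁, v₂} : Finset V).card = 2 ∧ IsIndep G ({v₁, v₂} : Finset V)) :
    ((TSk G 2).neighborSet ⟨{v₁, v₂}, h⟩).ncard
      = (G.neighborSet v₂ \ G.neighborSet v₁).ncard
        + (G.neighborSet v₁ \ G.neighborSet v₂).ncard := by
  classical
  have hne : v₁ ≠ v₂ := by
    intro e; subst e; simp at h
  have hnadj : ¬ G.Adj v₁ v₂ := h.2 v₁ (by simp) v₂ (by simp)
  set I0 : Finset V := {v₁, v₂} with hI0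
  set Iv : TSVert G 2 := ⟨I0, h⟩ with hIv
  set g : TSVert G 2 → V := fun J =>
    if hJ : ∃ w, (J : Finset V) \ I0 = {w} then hJ.choose else v₁ with hg
  have gspec : ∀ (J : TSVert G 2) (w : V), (J : Finset V) \ I0 = {w} → g J = w := by
    intro J w hw
    have hex : ∃ w, (J : Finset V) \ I0 = {w} := ⟨w, hw⟩
    have hs := hex.choose_spec
    simp only [hg, dif_pos hex]
    exact (Finset.singleton_injective (hw.symm.trans hs)).symm
  have char : ∀ J : TSVert G 2, J ∈ (TSk G 2).neighborSet Iv ↔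
      ((G.Adj v₁ (g J) ∧ ¬ G.Adj v₂ (g J) ∧ (J : Finset V) = {v₂, g J}) ∨
       (G.Adj v₂ (g J) ∧ ¬ G.Adj v₁ (g J) ∧ (J : Finset V) = {v₁, g J})) := by
    intro J
    constructor
    · intro hJ
      rw [SimpleGraph.mem_neighborSet, TSk, SimpleGraph.fromRel_adj] at hJ
      obtain ⟨hnJ, hrel⟩ := hJ
      have hrel' : ∃ u w, (Iv : Finset V) \ (J : Finset V) = {u} ∧
          (J : Finset V) \ (Iv : Finset V) = {w} ∧ G.Adj u w := by
        rcases hrel with ⟨u, w, h1, h2, h3⟩ | ⟨u, w, h1, h2, h3⟩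
        · exact ⟨u, w, h1, h2, h3⟩
        · exact ⟨w, u, h2, h1, h3.symm⟩
      obtain ⟨u, w, h1, h2, h3⟩ := hrel'
      have hgJ : g J = w := gspec J w h2
      have hu : u ∈ I0 := by
        have hm : u ∈ (Iv : Finset V) \ (J : Finset V) := by
          rw [h1]; exact Finset.mem_singleton_self u
        exact (Finset.mem_sdiff.mp hm).1
      have huJ : u ∉ (J : Finset V) := by
        have hm : u ∈ (Iv : Finset V) \ (J : Finset V) := by
          rw [h1]; exact Finset.mem_singleton_self u
        exact (Finset.mem_sdiff.mp hm).2
      have hwm : w ∈ (J : Finset V) ∧ w ∉ I0 := by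
        have hm : w ∈ (J : Finset V) \ (Iv : Finset V) := by
          rw [h2]; exact Finset.mem_singleton_self w
        exact Finset.mem_sdiff.mp hm
      have hJcard : (J : Finset V).card = 2 := J.2.1
      have hJindep : IsIndep G (J : Finset V) := J.2.2
      have hwv₁ : w ≠ v₁ := by intro e; exact hwm.2 (by simp [hI0, e])
      have hwv₂ : w ≠ v₂ := by intro e; exact hwm.2 (by simp [hI0, e])
      rcases Finset.mem_insert.mp hu with rfl | hu2
      · -- u = v₁ : then v₂ ∈ J, J = {v₂, w}
        have hv2J : v₂ ∈ (J : Finset V) := by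
          by_contra hc
          have : v₂ ∈ (Iv : Finset V) \ (J : Finset V) := by
            refine Finset.mem_sdiff.mpr ⟨by simp [hIv, hI0], hc⟩
          rw [h1] at this
          exact hne (Finset.mem_singleton.mp this).symm
        have hsub : ({v₂, w} : Finset V) ⊆ (J : Finset V) := by
          intro x hx
          rcases Finset.mem_insert.mp hx with rfl | hx
          · exact hv2J
          · rw [Finset.mem_singleton.mp hx]; exact hwm.1
        have hcard2 : ({v₂, w} : Finset V).card = 2 := by
          rw [Finset.card_insert_of_notMem (by simpa using (Ne.symm hwv₂))]
          simp
        have hJeq : (J : Finset V) = {v₂, w} :=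
          (Finset.eq_of_subset_of_card_le hsub (by omega)).symm
        left
        rw [hgJ]
        exact ⟨h3, hJindep v₂ hv2J w hwm.1, hJeq⟩
      · have hu2' : u = v₂ := Finset.mem_singleton.mp hu2
        subst hu2'
        have hv1J : v₁ ∈ (J : Finset V) := by
          by_contra hc
          have : v₁ ∈ (Iv : Finset V) \ (J : Finset V) := by
            refine Finset.mem_sdiff.mpr ⟨by simp [hIv, hI0], hc⟩
          rw [h1] at this
          exact hne (Finset.mem_singleton.mp this)
        have hsub : ({v₁, w} : Finset V) ⊆ (J : Finset V) := by
          intro x hx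
          rcases Finset.mem_insert.mp hx with rfl | hx
          · exact hv1J
          · rw [Finset.mem_singleton.mp hx]; exact hwm.1
        have hcard2 : ({v₁, w} : Finset V).card = 2 := by
          rw [Finset.card_insert_of_notMem (by simpa using (Ne.symm hwv₁))]
          simp
        have hJeq : (J : Finset V) = {v₁, w} :=
          (Finset.eq_of_subset_of_card_le hsub (by omega)).symm
        right
        rw [hgJ]
        exact ⟨h3, hJindep v₁ hv1J w hwm.1, hJeq⟩
    · intro hcase
      rw [SimpleGraph.mem_neighborSet, TSk, SimpleGraph.fromRel_adj]
      rcases hcase with ⟨ha, hna, hJeq⟩ | ⟨ha, hna, hJeq⟩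
      · set w := g J with hw
        have hwv₁ : w ≠ v₁ := ha.ne'
        have hwv₂ : w ≠ v₂ := by
          intro e
          have := J.2.1
          rw [hJeq, e] at this
          simp at this
        have hd1 : (Iv : Finset V) \ (J : Finset V) = {v₁} := by
          rw [hJeq]
          ext x
          simp only [hIv, hI0, Finset.mem_sdiff, Finset.mem_insert, Finset.mem_singleton]
          constructor
          · rintro ⟨h1 | h1, h2⟩
            · exact h1
            · exact absurd (Or.inl h1) h2
          · rintro rfl
            exact ⟨Or.inl rfl, by push_neg; exact ⟨hne, Ne.symm hwv₁⟩⟩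
        have hd2 : (J : Finset V) \ (Iv : Finset V) = {w} := by
          rw [hJeq]
          ext x
          simp only [hIv, hI0, Finset.mem_sdiff, Finset.mem_insert, Finset.mem_singleton]
          constructor
          · rintro ⟨h1 | h1, h2⟩
            · exact absurd (Or.inr h1) h2
            · exact h1
          · rintro rfl
            exact ⟨Or.inr rfl, by push_neg; exact ⟨hwv₁, hwv₂⟩⟩
        refine ⟨?_, Or.inl ⟨v₁, w, hd1, hd2, ha⟩⟩
        intro e
        have : v₁ ∈ (J : Finset V) := by rw [← e]; simp [hIv, hI0]
        rw [hJeq] at this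
        simp only [Finset.mem_insert, Finset.mem_singleton] at this
        rcases this with h1 | h1
        · exact hne h1
        · exact hwv₁ h1.symm
      · set w := g J with hw
        have hwv₂ : w ≠ v₂ := ha.ne'
        have hwv₁ : w ≠ v₁ := by
          intro e
          have := J.2.1
          rw [hJeq, e] at this
          simp at this
        have hd1 : (Iv : Finset V) \ (J : Finset V) = {v₂} := by
          rw [hJeq]
          ext x
          simp only [hIv, hI0, Finset.mem_sdiff, Finset.mem_insert, Finset.mem_singleton]
          constructor
          · rintro ⟨h1 | h1, h2⟩
            · exact absurd (Or.inl h1) h2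
            · exact h1
          · rintro rfl
            exact ⟨Or.inr rfl, by push_neg; exact ⟨Ne.symm hne, Ne.symm hwv₂⟩⟩
        have hd2 : (J : Finset V) \ (Iv : Finset V) = {w} := by
          rw [hJeq]
          ext x
          simp only [hIv, hI0, Finset.mem_sdiff, Finset.mem_insert, Finset.mem_singleton]
          constructor
          · rintro ⟨h1 | h1, h2⟩
            · exact absurd (Or.inl h1) h2
            · exact h1
          · rintro rfl
            exact ⟨Or.inr rfl, by push_neg; exact ⟨hwv₁, hwv₂⟩⟩
        refine ⟨?_, Or.inl ⟨v₂, w, hd1, hd2, ha⟩⟩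
        intro e
        have : v₂ ∈ (J : Finset V) := by rw [← e]; simp [hIv, hI0]
        rw [hJeq] at this
        simp only [Finset.mem_insert, Finset.mem_singleton] at this
        rcases this with h1 | h1
        · exact hne h1.symm
        · exact hwv₂ h1.symm
  have hinj : Set.InjOn g ((TSk G 2).neighborSet Iv) := by
    intro J hJ J' hJ' he
    rcases (char J).mp hJ with ⟨a1, a2, a3⟩ | ⟨a1, a2, a3⟩ <;>
      rcases (char J').mp hJ' with ⟨b1, b2, b3⟩ | ⟨b1, b2, b3⟩
    · exact Subtype.ext (by rw [a3, b3, he])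
    · rw [he] at a1; exact absurd a1 b2
    · rw [he] at a2; exact absurd b1 a2
    · exact Subtype.ext (by rw [a3, b3, he])
  have himg : g '' ((TSk G 2).neighborSet Iv)
      = (G.neighborSet v₂ \ G.neighborSet v₁) ∪ (G.neighborSet v₁ \ G.neighborSet v₂) := by
    ext w
    simp only [Set.mem_image, Set.mem_union, Set.mem_diff, SimpleGraph.mem_neighborSet]
    constructor
    · rintro ⟨J, hJ, rfl⟩
      rcases (char J).mp hJ with ⟨a1, a2, a3⟩ | ⟨a1, a2, a3⟩
      · exact Or.inr ⟨a1, a2⟩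
      · exact Or.inl ⟨a1, a2⟩
    · rintro (⟨h1, h2⟩ | ⟨h1, h2⟩)
      · -- Adj v₂ w, ¬ Adj v₁ w : take J = {v₁, w}
        have hwv₁ : w ≠ v₁ := by
          intro e; rw [e] at h1; exact hnadj h1.symm
        have hwv₂ : w ≠ v₂ := h1.ne'
        have hcard : ({v₁, w} : Finset V).card = 2 := by
          rw [Finset.card_insert_of_notMem (by simpa using (Ne.symm hwv₁))]; simp
        have hindep : IsIndep G ({v₁, w} : Finset V) := by
          intro a ha b hb
          simp only [Finset.mem_insert, Finset.mem_singleton] at ha hb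
          rcases ha with rfl | rfl <;> rcases hb with rfl | rfl
          · exact G.irrefl
          · exact h2
          · exact fun hc => h2 hc.symm
          · exact G.irrefl
        refine ⟨⟨{v₁, w}, hcard, hindep⟩, ?_, ?_⟩
        · have hgval : g ⟨{v₁, w}, hcard, hindep⟩ = w := by
            apply gspec
            ext x
            simp only [hI0, Finset.mem_sdiff, Finset.mem_insert, Finset.mem_singleton]
            constructor
            · rintro ⟨h1' | h1', h2'⟩
              · exact absurd (Or.inl h1') h2'
              · exact h1'
            · rintro rfl
              exact ⟨Or.inr rfl, by push_neg; exact ⟨hwv₁, hwv₂⟩⟩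
          refine (char _).mpr (Or.inr ?_)
          rw [hgval]
          exact ⟨h1, h2, rfl⟩
        · apply gspec
          ext x
          simp only [hI0, Finset.mem_sdiff, Finset.mem_insert, Finset.mem_singleton]
          constructor
          · rintro ⟨h1' | h1', h2'⟩
            · exact absurd (Or.inl h1') h2'
            · exact h1'
          · rintro rfl
            exact ⟨Or.inr rfl, by push_neg; exact ⟨hwv₁, hwv₂⟩⟩
      · -- Adj v₁ w, ¬ Adj v₂ w : take J = {v₂, w}
        have hwv₂ : w ≠ v₂ := by
          intro e; rw [e] at h1; exact hnadj h1
        have hwv₁ : w ≠ v₁ := h1.ne'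
        have hcard : ({v₂, w} : Finset V).card = 2 := by
          rw [Finset.card_insert_of_notMem (by simpa using (Ne.symm hwv₂))]; simp
        have hindep : IsIndep G ({v₂, w} : Finset V) := by
          intro a ha b hb
          simp only [Finset.mem_insert, Finset.mem_singleton] at ha hb
          rcases ha with rfl | rfl <;> rcases hb with rfl | rfl
          · exact G.irrefl
          · exact h2
          · exact fun hc => h2 hc.symm
          · exact G.irrefl
        refine ⟨⟨{v₂, w}, hcard, hindep⟩, ?_, ?_⟩
        · have hgval : g ⟨{v₂, w}, hcard, hindep⟩ = w := by
            apply gspec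
            ext x
            simp only [hI0, Finset.mem_sdiff, Finset.mem_insert, Finset.mem_singleton]
            constructor
            · rintro ⟨h1' | h1', h2'⟩
              · exact absurd (Or.inr h1') h2'
              · exact h1'
            · rintro rfl
              exact ⟨Or.inr rfl, by push_neg; exact ⟨hwv₁, hwv₂⟩⟩
          refine (char _).mpr (Or.inl ?_)
          rw [hgval]
          exact ⟨h1, h2, rfl⟩
        · apply gspec
          ext x
          simp only [hI0, Finset.mem_sdiff, Finset.mem_insert, Finset.mem_singleton]
          constructor
          · rintro ⟨h1' | h1', h2'⟩
            · exact absurd (Or.inr h1') h2'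
            · exact h1'
          · rintro rfl
            exact ⟨Or.inr rfl, by push_neg; exact ⟨hwv₁, hwv₂⟩⟩
  have hdisj : Disjoint (G.neighborSet v₂ \ G.neighborSet v₁)
      (G.neighborSet v₁ \ G.neighborSet v₂) := by
    rw [Set.disjoint_left]
    rintro a ⟨ha1, ha2⟩ ⟨hb1, hb2⟩
    exact ha2 hb1
  calc ((TSk G 2).neighborSet Iv).ncard
      = (g '' ((TSk G 2).neighborSet Iv)).ncard := (Set.ncard_image_of_injOn hinj).symm
    _ = ((G.neighborSet v₂ \ G.neighborSet v₁) ∪ (G.neighborSet v₁ \ G.neighborSet v₂)).ncard := by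
        rw [himg]
    _ = (G.neighborSet v₂ \ G.neighborSet v₁).ncard
        + (G.neighborSet v₁ \ G.neighborSet v₂).ncard :=
        Set.ncard_union_eq hdisj (Set.toFinite _) (Set.toFinite _)

/-- For an Eulerian graph `G` on at least 4 vertices, every vertex `I = {v₁, v₂}` of
`TS_2(G)` has degree `deg v₁ + deg v₂ − 2|N(v₁) ∩ N(v₂)|`, which is even; hence every
connected component of `TS_2(G)` is Eulerian. -/
theorem stmt16 {V : Type*} [Fintype V] [DecidableEq V] (G : SimpleGraph V)
    (hn : 4 ≤ Fintype.card V) (hconn : G.Connected)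
    (heven : ∀ v : V, Even (G.neighborSet v).ncard) :
    (∀ v₁ v₂ : V,
      ∀ h : ({v₁, v₂} : Finset V).card = 2 ∧ IsIndep G ({v₁, v₂} : Finset V),
        ((TSk G 2).neighborSet ⟨{v₁, v₂}, h⟩).ncard
          = (G.neighborSet v₁).ncard + (G.neighborSet v₂).ncard
            - 2 * (G.neighborSet v₁ ∩ G.neighborSet v₂).ncard) ∧
    (∀ I : TSVert G 2, Even (((TSk G 2).neighborSet I).ncard)) := by
  classical
  have key : ∀ v₁ v₂ : V,
      ∀ h : ({v₁, v₂} : Finset V).card = 2 ∧ IsIndep G ({v₁, v₂} : Finset V),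
        ((TSk G 2).neighborSet ⟨{v₁, v₂}, h⟩).ncard
          = (G.neighborSet v₁).ncard + (G.neighborSet v₂).ncard
            - 2 * (G.neighborSet v₁ ∩ G.neighborSet v₂).ncard := by
    intro v₁ v₂ h
    rw [tsk_key G v₁ v₂ h]
    have e1 : G.neighborSet v₁ \ G.neighborSet v₂
        = G.neighborSet v₁ \ (G.neighborSet v₁ ∩ G.neighborSet v₂) := by
      ext x; simp only [Set.mem_diff, Set.mem_inter_iff]; tauto
    have e2 : G.neighborSet v₂ \ G.neighborSet v₁
        = G.neighborSet v₂ \ (G.neighborSet v₁ ∩ G.neighborSet v₂) := by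
      ext x; simp only [Set.mem_diff, Set.mem_inter_iff]; tauto
    have le1 : (G.neighborSet v₁ ∩ G.neighborSet v₂).ncard ≤ (G.neighborSet v₁).ncard :=
      Set.ncard_le_ncard Set.inter_subset_left (Set.toFinite _)
    have le2 : (G.neighborSet v₁ ∩ G.neighborSet v₂).ncard ≤ (G.neighborSet v₂).ncard :=
      Set.ncard_le_ncard Set.inter_subset_right (Set.toFinite _)
    rw [e1, e2, Set.ncard_diff Set.inter_subset_right (Set.toFinite _),
      Set.ncard_diff Set.inter_subset_left (Set.toFinite _)]
    omega
  refine ⟨key, ?_⟩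
  intro I
  obtain ⟨v₁, v₂, hne, hI⟩ := Finset.card_eq_two.mp I.2.1
  have hh : ({v₁, v₂} : Finset V).card = 2 ∧ IsIndep G ({v₁, v₂} : Finset V) := by
    rw [← hI]; exact I.2
  have hIeq : I = ⟨{v₁, v₂}, hh⟩ := Subtype.ext hI
  rw [hIeq, key v₁ v₂ hh]
  obtain ⟨a, ha⟩ := heven v₁
  obtain ⟨b, hb⟩ := heven v₂
  have le1 : (G.neighborSet v₁ ∩ G.neighborSet v₂).ncard ≤ (G.neighborSet v₁).ncard :=
    Set.ncard_le_ncard Set.inter_subset_left (Set.toFinite _)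
  exact ⟨a + b - (G.neighborSet v₁ ∩ G.neighborSet v₂).ncard, by omega⟩
end

section
/- For integers k, n with 1 ≤ k < n/2, every vertex of TS_k(C_n) has even degree and TS_k(C_n) is connected; hence TS_k(C_n) is Eulerian. -/
open SimpleGraph

namespace TS17

open Fin.CommRing

variable {n k : ℕ} [NeZero n]

/-! ### Arithmetic kit for `Fin n` -/

lemma vone (hn3 : 3 ≤ n) : (1 : Fin n).val = 1 := by
  rw [Fin.val_one']; exact Nat.mod_eq_of_lt (by omega)

lemma vtwo (hn3 : 3 ≤ n) : (2 : Fin n).val = 2 := by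
  rw [← one_add_one_eq_two, Fin.val_add, vone hn3]
  exact Nat.mod_eq_of_lt (by omega)

lemma vsub_le {x y : Fin n} (h : y.val ≤ x.val) : (x - y).val = x.val - y.val := by
  have hx := x.isLt
  rw [Fin.sub_def]
  show ((n - y.val) + x.val) % n = _
  rw [show (n - y.val) + x.val = n + (x.val - y.val) by omega, Nat.add_mod_left,
    Nat.mod_eq_of_lt (by omega)]

lemma vsub_lt {x y : Fin n} (h : x.val < y.val) : (x - y).val = n + x.val - y.val := by
  have hy := y.isLt
  rw [Fin.sub_def]
  show ((n - y.val) + x.val) % n = _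
  rw [Nat.mod_eq_of_lt (by omega)]
  omega

lemma one_ne_zero' (hn3 : 3 ≤ n) : (1 : Fin n) ≠ 0 := by
  intro h
  have := congrArg Fin.val h
  rw [vone hn3, Fin.val_zero] at this
  omega

lemma two_ne_zero' (hn3 : 3 ≤ n) : (2 : Fin n) ≠ 0 := by
  intro h
  have := congrArg Fin.val h
  rw [vtwo hn3, Fin.val_zero] at this
  omega

lemma eps_ne_zero (hn3 : 3 ≤ n) {ε : Fin n} (hε : ε = 1 ∨ ε = -1) : ε ≠ 0 := by
  rcases hε with rfl | rfl
  · exact one_ne_zero' hn3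
  · exact neg_ne_zero.mpr (one_ne_zero' hn3)

lemma two_eps_ne_zero (hn3 : 3 ≤ n) {ε : Fin n} (hε : ε = 1 ∨ ε = -1) : ε + ε ≠ 0 := by
  rcases hε with rfl | rfl
  · rw [one_add_one_eq_two]; exact two_ne_zero' hn3
  · rw [show (-1 : Fin n) + -1 = -2 by ring]
    exact neg_ne_zero.mpr (two_ne_zero' hn3)

/-! ### Cycle graph adjacency -/

lemma adjC (hn3 : 3 ≤ n) {u v : Fin n} :
    (cycleGraph n).Adj u v ↔ v = u + 1 ∨ v = u - 1 := by
  rw [cycleGraph_adj']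
  constructor
  · rintro (h | h)
    · right
      have h1 : u - v = 1 := Fin.ext (by rw [h, vone hn3])
      have h2 : u = 1 + v := sub_eq_iff_eq_add.mp h1
      rw [h2]; ring
    · left
      have h1 : v - u = 1 := Fin.ext (by rw [h, vone hn3])
      have h2 : v = 1 + u := sub_eq_iff_eq_add.mp h1
      rw [h2]; ring
  · rintro (rfl | rfl)
    · right; rw [add_sub_cancel_left, vone hn3]
    · left; rw [sub_sub_cancel, vone hn3]

lemma adj_self_add (hn3 : 3 ≤ n) {ε : Fin n} (hε : ε = 1 ∨ ε = -1) (x : Fin n) :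
    (cycleGraph n).Adj x (x + ε) := by
  rw [adjC hn3]
  rcases hε with rfl | rfl
  · left; rfl
  · right; ring

/-! ### Moves -/

lemma move_core (hn3 : 3 ≤ n) (I : TSVert (cycleGraph n) k) {x ε : Fin n}
    (hx : x ∈ I.val) (hε : ε = 1 ∨ ε = -1) :
    x + ε ∉ I.val ∧ I.val \ insert (x + ε) (I.val.erase x) = {x} ∧
      insert (x + ε) (I.val.erase x) \ I.val = {x + ε} := by
  have hne : x + ε ≠ x := by
    intro h
    exact eps_ne_zero hn3 hε (by simpa using h)
  have hxe : x + ε ∉ I.val := fun h => I.prop.2 x hx (x + ε) h (adj_self_add hn3 hε x)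
  refine ⟨hxe, ?_, ?_⟩
  · ext y
    simp only [Finset.mem_sdiff, Finset.mem_insert, Finset.mem_erase, Finset.mem_singleton]
    constructor
    · rintro ⟨hyS, hy⟩
      push_neg at hy
      by_cases h : y = x
      · exact h
      · exact absurd hyS (hy.2 h)
    · rintro rfl
      refine ⟨hx, ?_⟩
      push_neg
      exact ⟨fun h => hne h.symm, fun h => absurd rfl h⟩
  · ext y
    simp only [Finset.mem_sdiff, Finset.mem_insert, Finset.mem_erase, Finset.mem_singleton]
    constructor
    · rintro ⟨h | ⟨_, hyS⟩, hy⟩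
      · exact h
      · exact absurd hyS hy
    · rintro rfl
      exact ⟨Or.inl rfl, hxe⟩

lemma slide (hn3 : 3 ≤ n) (I : TSVert (cycleGraph n) k) {x ε : Fin n}
    (hx : x ∈ I.val) (hε : ε = 1 ∨ ε = -1) (h2 : x + ε + ε ∉ I.val) :
    ∃ J : TSVert (cycleGraph n) k,
      J.val = insert (x + ε) (I.val.erase x) ∧ (TSk (cycleGraph n) k).Adj I J := by
  obtain ⟨hxe, hd1, hd2⟩ := move_core hn3 I hx hε
  have key : ∀ w, (cycleGraph n).Adj (x + ε) w → w = x ∨ w = x + ε + ε := by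
    intro w hw
    rcases (adjC hn3).1 hw with rfl | rfl
    · rcases hε with rfl | rfl
      · right; rfl
      · left; ring
    · rcases hε with rfl | rfl
      · left; ring
      · right; ring
  have hk1 : 1 ≤ k := by
    have := Finset.card_pos.mpr ⟨x, hx⟩
    omega
  have hcard : (insert (x + ε) (I.val.erase x)).card = k := by
    rw [Finset.card_insert_of_notMem (fun h => hxe (Finset.mem_of_mem_erase h)),
      Finset.card_erase_of_mem hx, I.prop.1]
    omega
  have hindep : IsIndep (cycleGraph n) (insert (x + ε) (I.val.erase x)) := by
    intro u hu v hv hadj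
    rw [Finset.mem_insert, Finset.mem_erase] at hu hv
    rcases hu with rfl | ⟨hu1, hu2⟩
    · rcases hv with rfl | ⟨hv1, hv2⟩
      · exact (cycleGraph n).loopless.irrefl _ hadj
      · rcases key v hadj with rfl | rfl
        · exact hv1 rfl
        · exact h2 hv2
    · rcases hv with rfl | ⟨hv1, hv2⟩
      · rcases key u hadj.symm with rfl | rfl
        · exact hu1 rfl
        · exact h2 hu2
      · exact I.prop.2 u hu2 v hv2 hadj
  refine ⟨⟨insert (x + ε) (I.val.erase x), hcard, hindep⟩, rfl, ?_⟩
  rw [TSk, SimpleGraph.fromRel_adj]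
  refine ⟨?_, Or.inl ⟨x, x + ε, hd1, hd2, adj_self_add hn3 hε x⟩⟩
  intro h
  have hx' : x ∈ I.val \ insert (x + ε) (I.val.erase x) := by
    rw [hd1]; exact Finset.mem_singleton_self x
  rw [Finset.mem_sdiff] at hx'
  apply hx'.2
  rw [← show I.val = insert (x + ε) (I.val.erase x) from congrArg Subtype.val h]
  exact hx'.1

lemma adj_iff (hn3 : 3 ≤ n) (I J : TSVert (cycleGraph n) k) :
    (TSk (cycleGraph n) k).Adj I J ↔
      ∃ x ∈ I.val, ∃ ε : Fin n, (ε = 1 ∨ ε = -1) ∧ x + ε + ε ∉ I.val ∧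
        J.val = insert (x + ε) (I.val.erase x) := by
  constructor
  · intro hadj
    rw [TSk, SimpleGraph.fromRel_adj] at hadj
    obtain ⟨hne, hrel⟩ := hadj
    have hrel' : ∃ u v, I.val \ J.val = {u} ∧ J.val \ I.val = {v} ∧ (cycleGraph n).Adj u v := by
      rcases hrel with ⟨u, v, h1, h2, h3⟩ | ⟨u, v, h1, h2, h3⟩
      · exact ⟨u, v, h1, h2, h3⟩
      · exact ⟨v, u, h2, h1, h3.symm⟩
    obtain ⟨u, v, hIJ, hJI, huv⟩ := hrel'
    have hu : u ∈ I.val ∧ u ∉ J.val := by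
      have : u ∈ I.val \ J.val := by rw [hIJ]; exact Finset.mem_singleton_self u
      rw [Finset.mem_sdiff] at this; exact this
    have hv : v ∈ J.val ∧ v ∉ I.val := by
      have : v ∈ J.val \ I.val := by rw [hJI]; exact Finset.mem_singleton_self v
      rw [Finset.mem_sdiff] at this; exact this
    have hJval : J.val = insert v (I.val.erase u) := by
      ext y
      rw [Finset.mem_insert, Finset.mem_erase]
      constructor
      · intro hy
        by_cases hyI : y ∈ I.val
        · right
          refine ⟨fun h => hu.2 (h ▸ hy), hyI⟩
        · left
          have : y ∈ J.val \ I.val := Finset.mem_sdiff.mpr ⟨hy, hyI⟩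
          rw [hJI] at this
          exact Finset.mem_singleton.mp this
      · rintro (rfl | ⟨hy1, hy2⟩)
        · exact hv.1
        · by_contra hyJ
          have : y ∈ I.val \ J.val := Finset.mem_sdiff.mpr ⟨hy2, hyJ⟩
          rw [hIJ] at this
          exact hy1 (Finset.mem_singleton.mp this)
    set ε := v - u with hεdef
    have hε : ε = 1 ∨ ε = -1 := by
      rcases (adjC hn3).1 huv with rfl | rfl
      · left; rw [hεdef]; ring
      · right; rw [hεdef]; ring
    have huv' : u + ε = v := by rw [hεdef]; ring
    refine ⟨u, hu.1, ε, hε, ?_, by rw [huv']; exact hJval⟩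
    -- u + ε + ε = v + ε ∉ I.val
    rw [huv']
    intro hmem
    have hvε : v + ε ∉ J.val :=
      fun h => J.prop.2 v hv.1 (v + ε) h (adj_self_add hn3 hε v)
    have hvεu : v + ε ≠ u := by
      intro h
      have : ε + ε = 0 := by
        have : u + ε + ε = u := by rw [huv', h]
        have := congrArg (· - u) this
        simpa [add_assoc, add_sub_cancel_left, add_comm, add_left_comm] using this
      exact two_eps_ne_zero hn3 hε this
    apply hvε
    rw [hJval, Finset.mem_insert, Finset.mem_erase]
    right
    exact ⟨hvεu, hmem⟩
  · rintro ⟨x, hx, ε, hε, h2, hJval⟩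
    obtain ⟨J', hJ'val, hadj⟩ := slide hn3 I hx hε h2
    have : J = J' := Subtype.ext (by rw [hJval, hJ'val])
    rw [this]
    exact hadj

/-! ### Even degree -/

/-- The direction of a move: `true` is `+1`, `false` is `-1`. -/
def dmov (n : ℕ) [NeZero n] : Bool → Fin n := fun b => if b then 1 else -1

lemma dmov_or (b : Bool) : dmov n b = 1 ∨ dmov n b = -1 := by
  cases b
  · right; rfl
  · left; rfl

lemma dmov_inj (hn3 : 3 ≤ n) {b c : Bool} (h : dmov n b = dmov n c) : b = c := by
  cases b <;> cases c <;> first | rfl | skip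
  · -- dmov false = dmov true : -1 = 1
    exfalso
    have h1 : (-1 : Fin n) = 1 := h
    have h2 := congrArg (fun z => (1 : Fin n) + z) h1
    exact two_ne_zero' hn3 (by rw [← one_add_one_eq_two, ← h2]; ring)
  · exfalso
    have h1 : (1 : Fin n) = -1 := h
    have h2 := congrArg (fun z => (1 : Fin n) + z) h1
    exact two_ne_zero' hn3 (by rw [← one_add_one_eq_two, h2]; ring)

/-- The finset resulting from the move `p` applied to `I`. -/
def emov (I : Finset (Fin n)) [NeZero n] (p : Fin n × Bool) : Finset (Fin n) :=
  insert (p.1 + dmov n p.2) (I.erase p.1)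

lemma even_deg (hk : 1 ≤ k) (hn : 2 * k < n) (I : TSVert (cycleGraph n) k) :
    Even (((TSk (cycleGraph n) k).neighborSet I).ncard) := by
  classical
  have hn3 : 3 ≤ n := by omega
  let A : Finset (Fin n) := I.val.filter (fun x => x + 2 ∉ I.val)
  let B : Finset (Fin n) := I.val.filter (fun x => x - 2 ∉ I.val)
  let P : Finset (Fin n × Bool) :=
    A.image (fun x => (x, true)) ∪ B.image (fun x => (x, false))
  have hPmem : ∀ p : Fin n × Bool, p ∈ P ↔ (p.2 = true ∧ p.1 ∈ A) ∨ (p.2 = false ∧ p.1 ∈ B) := by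
    rintro ⟨a, b⟩
    constructor
    · intro hp
      rcases Finset.mem_union.mp hp with h | h <;> obtain ⟨x, hx, hxe⟩ := Finset.mem_image.mp h
      · left; cases hxe; exact ⟨rfl, hx⟩
      · right; cases hxe; exact ⟨rfl, hx⟩
    · rintro (⟨hb, ha⟩ | ⟨hb, ha⟩)
      · obtain rfl : b = true := hb
        exact Finset.mem_union_left _ (Finset.mem_image.mpr ⟨a, ha, rfl⟩)
      · obtain rfl : b = false := hb
        exact Finset.mem_union_right _ (Finset.mem_image.mpr ⟨a, ha, rfl⟩)
  have hPS : ∀ p : Fin n × Bool, p ∈ P → p.1 ∈ I.val := by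
    intro p hp
    rcases (hPmem p).1 hp with ⟨_, ha⟩ | ⟨_, ha⟩ <;> exact (Finset.mem_filter.mp ha).1
  -- the image of the neighbor set under `Subtype.val`
  have himg : Subtype.val '' ((TSk (cycleGraph n) k).neighborSet I)
      = ↑(P.image (emov I.val)) := by
    ext F
    simp only [Set.mem_image, SimpleGraph.mem_neighborSet, Finset.coe_image, Finset.mem_coe]
    constructor
    · rintro ⟨J, hadj, rfl⟩
      obtain ⟨x, hx, ε, hε, h2, hval⟩ := (adj_iff hn3 I J).1 hadj
      rcases hε with rfl | rfl
      · refine ⟨(x, true), (hPmem _).mpr (Or.inl ⟨rfl, ?_⟩), ?_⟩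
        · exact Finset.mem_filter.mpr ⟨hx, by rw [show x + 2 = x + 1 + 1 by ring]; exact h2⟩
        · rw [hval]; rfl
      · refine ⟨(x, false), (hPmem _).mpr (Or.inr ⟨rfl, ?_⟩), ?_⟩
        · exact Finset.mem_filter.mpr ⟨hx, by rw [show x - 2 = x + -1 + -1 by ring]; exact h2⟩
        · rw [hval]; rfl
    · rintro ⟨p, hp, rfl⟩
      rcases (hPmem p).1 hp with ⟨hb, ha⟩ | ⟨hb, ha⟩
      · obtain ⟨hxS, hx2⟩ := Finset.mem_filter.mp ha
        obtain ⟨J, hJval, hadj⟩ := slide hn3 I hxS (Or.inl rfl)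
          (by rw [show p.1 + 1 + 1 = p.1 + 2 by ring]; exact hx2)
        refine ⟨J, hadj, ?_⟩
        rw [hJval, emov, hb]; rfl
      · obtain ⟨hxS, hx2⟩ := Finset.mem_filter.mp ha
        obtain ⟨J, hJval, hadj⟩ := slide hn3 I hxS (Or.inr rfl)
          (by rw [show p.1 + -1 + -1 = p.1 - 2 by ring]; exact hx2)
        refine ⟨J, hadj, ?_⟩
        rw [hJval, emov, hb]; rfl
  have hinj : Set.InjOn (emov I.val) ↑P := by
    intro p hp q hq hpq
    have h1 := move_core hn3 I (hPS p hp) (dmov_or p.2)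
    have h2 := move_core hn3 I (hPS q hq) (dmov_or q.2)
    have e1 : (p.1 : Fin n) = q.1 := by
      have := h1.2.1
      rw [show insert (p.1 + dmov n p.2) (I.val.erase p.1) = emov I.val p from rfl, hpq,
        show emov I.val q = insert (q.1 + dmov n q.2) (I.val.erase q.1) from rfl, h2.2.1] at this
      exact Finset.singleton_injective this.symm
    have e2 : p.1 + dmov n p.2 = q.1 + dmov n q.2 := by
      have := h1.2.2
      rw [show insert (p.1 + dmov n p.2) (I.val.erase p.1) = emov I.val p from rfl, hpq,
        show emov I.val q = insert (q.1 + dmov n q.2) (I.val.erase q.1) from rfl, h2.2.2] at this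
      exact Finset.singleton_injective this.symm
    have e3 : dmov n p.2 = dmov n q.2 := by
      rw [e1] at e2
      exact add_left_cancel e2
    exact Prod.ext e1 (dmov_inj hn3 e3)
  have hncard : ((TSk (cycleGraph n) k).neighborSet I).ncard = (P.image (emov I.val)).card := by
    rw [← Set.ncard_image_of_injective _ Subtype.val_injective, himg, Set.ncard_coe_finset]
  have hcard2 : (P.image (emov I.val)).card = P.card := Finset.card_image_of_injOn hinj
  have hdisj : Disjoint (A.image (fun x => (x, true))) (B.image (fun x => (x, false))) := by
    rw [Finset.disjoint_left]
    rintro ⟨a, b⟩ h1 h2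
    obtain ⟨x, _, hxe⟩ := Finset.mem_image.mp h1
    obtain ⟨y, _, hye⟩ := Finset.mem_image.mp h2
    cases hxe; cases hye
  have hcard3 : P.card = A.card + B.card := by
    rw [show P = A.image (fun x => (x, true)) ∪ B.image (fun x => (x, false)) from rfl,
      Finset.card_union_of_disjoint hdisj,
      Finset.card_image_of_injective _ (fun a b h => (Prod.mk.injEq _ _ _ _).mp h |>.1),
      Finset.card_image_of_injective _ (fun a b h => (Prod.mk.injEq _ _ _ _).mp h |>.1)]
  have hAB : A.card = B.card := by
    have ha := Finset.card_filter_add_card_filter_not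
      (s := I.val) (p := fun x => x + 2 ∈ I.val)
    have hb := Finset.card_filter_add_card_filter_not
      (s := I.val) (p := fun x => x - 2 ∈ I.val)
    have himg2 : (I.val.filter (fun x => x + 2 ∈ I.val)).image (· + 2)
        = I.val.filter (fun x => x - 2 ∈ I.val) := by
      ext y
      simp only [Finset.mem_image, Finset.mem_filter]
      constructor
      · rintro ⟨x, ⟨hx1, hx2⟩, rfl⟩
        exact ⟨hx2, by rw [show x + 2 - 2 = x by ring]; exact hx1⟩
      · rintro ⟨hy1, hy2⟩
        exact ⟨y - 2, ⟨hy2, by rw [show y - 2 + 2 = y by ring]; exact hy1⟩,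
          by rw [show y - 2 + 2 = y by ring]⟩
    have hval := congrArg Finset.card himg2
    rw [Finset.card_image_of_injective _ (add_left_injective (2 : Fin n))] at hval
    have hA' : A.card = (I.val.filter (fun x => ¬ (x + 2 ∈ I.val))).card := rfl
    have hB' : B.card = (I.val.filter (fun x => ¬ (x - 2 ∈ I.val))).card := rfl
    omega
  rw [hncard, hcard2, hcard3, hAB]
  exact ⟨B.card, rfl⟩

/-! ### Connectivity -/

/-- The canonical configuration `{0, 2, ..., 2(k-1)}`. -/
def canonF (n k : ℕ) (hn : 2 * k < n) : Finset (Fin n) :=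
  Finset.image (fun j : Fin k => (⟨2 * j.val, by have := j.isLt; omega⟩ : Fin n)) Finset.univ

lemma mem_canonF (hn : 2 * k < n) {x : Fin n} :
    x ∈ canonF n k hn ↔ x.val % 2 = 0 ∧ x.val < 2 * k := by
  simp only [canonF, Finset.mem_image, Finset.mem_univ, true_and]
  constructor
  · rintro ⟨j, hj⟩
    have := congrArg Fin.val hj
    simp only at this
    have := j.isLt
    omega
  · rintro ⟨h1, h2⟩
    have hx := x.isLt
    refine ⟨⟨x.val / 2, by omega⟩, ?_⟩
    apply Fin.ext
    simp only
    omega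

lemma card_canonF (hn : 2 * k < n) : (canonF n k hn).card = k := by
  rw [canonF, Finset.card_image_of_injective, Finset.card_univ, Fintype.card_fin]
  intro a b h
  have := congrArg Fin.val h
  simp only at this
  exact Fin.ext (by omega)

lemma indep_canonF (hn : 2 * k < n) (hk : 1 ≤ k) : IsIndep (cycleGraph n) (canonF n k hn) := by
  have hn3 : 3 ≤ n := by omega
  haveI : NeZero n := ⟨by omega⟩
  intro u hu v hv hadj
  rw [mem_canonF hn] at hu hv
  rcases (adjC hn3).1 hadj with rfl | rfl
  · have : (u + 1).val = (u.val + 1) % n := by rw [Fin.val_add, vone hn3]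
    rw [Nat.mod_eq_of_lt (by omega)] at this
    omega
  · by_cases h0 : 1 ≤ u.val
    · have : (u - 1).val = u.val - 1 := by
        rw [vsub_le (by rw [vone hn3]; omega), vone hn3]
      omega
    · have : (u - 1).val = n + u.val - 1 := by
        rw [vsub_lt (by rw [vone hn3]; omega), vone hn3]
      omega

/-- The canonical vertex of `TS_k(C_n)`. -/
def canonV (hk : 1 ≤ k) (hn : 2 * k < n) : TSVert (cycleGraph n) k :=
  ⟨canonF n k hn, card_canonF hn, indep_canonF hn hk⟩

lemma chain (I : Finset (Fin n)) (h : ∀ x ∈ I, 1 ≤ x.val → x - 2 ∈ I) :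
    ∀ m : ℕ, ∀ x ∈ I, x.val = m → ∀ y : Fin n, y.val ≤ m → y.val % 2 = m % 2 → y ∈ I := by
  intro m
  induction m using Nat.strong_induction_on with
  | _ m IH =>
    intro x hx hxm y hy hpar
    by_cases hn3 : 3 ≤ n
    case neg =>
      -- if n < 3, all values small; still works: y.val = m forced? not necessarily, but we can
      -- handle uniformly below; this case is subsumed by the general argument
      by_cases hym : y.val = m
      · exact (Fin.ext (hxm ▸ hym) : y = x) ▸ hx
      · have hm2 : y.val + 2 ≤ m := by omega
        have hx1 : 1 ≤ x.val := by omega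
        have hx2 := h x hx hx1
        have hval : (x - 2).val = m - 2 := by
          rw [vsub_le] <;> rw [vtwo (by omega)] <;> omega
        exact IH (m - 2) (by omega) (x - 2) hx2 hval y (by omega) (by omega)
    case pos =>
      by_cases hym : y.val = m
      · exact (Fin.ext (hxm ▸ hym) : y = x) ▸ hx
      · have hm2 : y.val + 2 ≤ m := by omega
        have hx1 : 1 ≤ x.val := by omega
        have hx2 := h x hx hx1
        have hval : (x - 2).val = m - 2 := by
          rw [vsub_le] <;> rw [vtwo hn3] <;> omega
        exact IH (m - 2) (by omega) (x - 2) hx2 hval y (by omega) (by omega)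

lemma stuck (hk : 1 ≤ k) (hn : 2 * k < n) (I : TSVert (cycleGraph n) k)
    (h : ∀ x ∈ I.val, 1 ≤ x.val → x - 2 ∈ I.val) : I.val = canonF n k hn := by
  have hn3 : 3 ≤ n := by omega
  have ch := chain I.val h
  -- counting: any element gives a lower bound on the cardinality
  have count : ∀ w ∈ I.val, w.val / 2 + 1 ≤ k := by
    intro w hw
    have hle : (Finset.univ : Finset (Fin (w.val / 2 + 1))).card ≤ I.val.card := by
      apply Finset.card_le_card_of_injOn
        (fun j => (⟨w.val - 2 * j.val, by have := w.isLt; omega⟩ : Fin n))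
      · intro j _
        apply ch w.val w hw rfl
        · simp only
          omega
        · have := j.isLt
          simp only
          omega
      · intro a _ b _ hab
        have := congrArg Fin.val hab
        simp only at this
        have ha := a.isLt
        have hb := b.isLt
        exact Fin.ext (by omega)
    rw [Finset.card_univ, Fintype.card_fin, I.prop.1] at hle
    exact hle
  have key : ∀ x ∈ I.val, x.val % 2 = 0 ∧ x.val < 2 * k := by
    intro x hx
    have hx2k := count x hx
    constructor
    · by_contra hodd
      -- then 1 ∈ I, hence n-1 ∈ I, contradiction with counting
      have h1 : (⟨1, by omega⟩ : Fin n) ∈ I.val := by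
        apply ch x.val x hx rfl
        · show 1 ≤ x.val
          omega
        · show 1 % 2 = x.val % 2
          omega
      have h2 := h _ h1 (Nat.le_refl 1)
      have hval : ((⟨1, by omega⟩ : Fin n) - 2).val = n - 1 := by
        rw [vsub_lt (by rw [vtwo hn3]; exact Nat.one_lt_two), vtwo hn3]
        show n + 1 - 2 = n - 1
        omega
      have := count _ h2
      rw [hval] at this
      omega
    · omega
  have hsub : I.val ⊆ canonF n k hn := by
    intro x hx
    rw [mem_canonF hn]
    exact key x hx
  exact Finset.eq_of_subset_of_card_le hsub (by rw [card_canonF hn, I.prop.1])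

lemma reach (hk : 1 ≤ k) (hn : 2 * k < n) (I : TSVert (cycleGraph n) k) :
    (TSk (cycleGraph n) k).Reachable I (canonV hk hn) := by
  have hn3 : 3 ≤ n := by omega
  suffices H : ∀ m : ℕ, ∀ I : TSVert (cycleGraph n) k, (∑ x ∈ I.val, x.val) = m →
      (TSk (cycleGraph n) k).Reachable I (canonV hk hn) from H _ I rfl
  intro m
  induction m using Nat.strong_induction_on with
  | _ m IH =>
    intro I hm
    by_cases hI : I.val = canonF n k hn
    · have : I = canonV hk hn := Subtype.ext hI
      rw [this]
    · have hex : ∃ x ∈ I.val, 1 ≤ x.val ∧ x - 2 ∉ I.val := by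
        by_contra hc
        push_neg at hc
        exact hI (stuck hk hn I (fun x hx h1 => hc x hx h1))
      obtain ⟨x, hx, hx1, hx2⟩ := hex
      obtain ⟨J, hJval, hadj⟩ := slide hn3 I hx (Or.inr rfl)
        (by rw [show x + -1 + -1 = x - 2 by ring]; exact hx2)
      have hxm1 : x + -1 = x - 1 := by ring
      have hnotmem : x - 1 ∉ I.val.erase x := by
        intro hmem
        have := (move_core hn3 I hx (Or.inr rfl)).1
        rw [hxm1] at this
        exact this (Finset.mem_of_mem_erase hmem)
      have hsum : (∑ y ∈ J.val, y.val) = (x - 1).val + ∑ y ∈ I.val.erase x, y.val := by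
        rw [hJval, hxm1, Finset.sum_insert hnotmem]
      have hsum2 : x.val + ∑ y ∈ I.val.erase x, y.val = m := by
        rw [Finset.add_sum_erase _ _ hx]; exact hm
      have hvalx : (x - 1).val = x.val - 1 := by
        rw [vsub_le] <;> rw [vone hn3] <;> omega
      have hlt : (∑ y ∈ J.val, y.val) < m := by
        rw [hsum, hvalx]; omega
      exact (hadj.reachable).trans (IH _ hlt J rfl)

end TS17

/-- For `1 ≤ k < n/2`, every vertex of `TS_k(C_n)` has even degree and `TS_k(C_n)` is
connected; hence `TS_k(C_n)` is Eulerian. -/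
theorem stmt17 (n k : ℕ) (hk : 1 ≤ k) (hn : 2 * k < n) :
    (∀ I : TSVert (SimpleGraph.cycleGraph n) k,
      Even (((TSk (SimpleGraph.cycleGraph n) k).neighborSet I).ncard)) ∧
    (TSk (SimpleGraph.cycleGraph n) k).Connected := by
  haveI : NeZero n := ⟨by omega⟩
  refine ⟨fun I => TS17.even_deg hk hn I, ?_⟩
  rw [SimpleGraph.connected_iff_exists_forall_reachable]
  exact ⟨TS17.canonV hk hn, fun w => (TS17.reach hk hn w).symm⟩
end
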